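/- Fix L > 0 and 0 < δ < 1, and let 1/2 < γ < 1. Then there exist a universal constant c > 0 and n₀ ∈ ℕ (depending only on δ) such that for all n > n₀ and every v ∈ Incomp(δ, δ n^{1/2-γ}), there exists k ∈ {1,...,n} with n - δn/log(n) ≤ k and LCD_{L}( v_{[1:k]} / ‖v_{[1:k]}‖₂ ) ≥ c √n / log n. -/

import Mathlib

open MeasureTheory ProbabilityTheory Real
open scoped ENNReal

noncomputable section

namespace Paper

def toE {m : ℕ} (v : Fin m → ℝ) : EuclideanSpace ℝ (Fin m) := WithLp.toLp 2 v

def mulE {m n : ℕ} (M : Matrix (Fin m) (Fin n) ℝ) (x : EuclideanSpace ℝ (Fin n)) :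
    EuclideanSpace ℝ (Fin m) := toE (M.mulVec (fun i => x i))

def opNorm {n : ℕ} (M : Matrix (Fin n) (Fin n) ℝ) : ℝ :=
  sSup {r : ℝ | ∃ x : EuclideanSpace ℝ (Fin n), ‖x‖ = 1 ∧ r = ‖mulE M x‖}

def sMin {n : ℕ} (M : Matrix (Fin n) (Fin n) ℝ) : ℝ :=
  sInf {r : ℝ | ∃ x : EuclideanSpace ℝ (Fin n), ‖x‖ = 1 ∧ r = ‖mulE M x‖}

def suppCard {n : ℕ} (v : EuclideanSpace ℝ (Fin n)) : ℕ := Nat.card {i : Fin n // v i ≠ 0}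

def Comp {n : ℕ} (δ ρ : ℝ) : Set (EuclideanSpace ℝ (Fin n)) :=
  {x | ‖x‖ = 1 ∧ ∃ z : EuclideanSpace ℝ (Fin n), (suppCard z : ℝ) ≤ δ * n ∧ ‖x - z‖ ≤ ρ}

def Incomp {n : ℕ} (δ ρ : ℝ) : Set (EuclideanSpace ℝ (Fin n)) :=
  {x | ‖x‖ = 1 ∧ x ∉ Comp δ ρ}

def logPlus (x : ℝ) : ℝ := max (Real.log x) 0

def LCD {m : ℕ} (L : ℝ) (v : EuclideanSpace ℝ (Fin m)) : ℝ :=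
  sInf {θ : ℝ | 0 < θ ∧ ∃ p : Fin m → ℤ,
    ‖θ • v - toE (fun i => (p i : ℝ))‖ < L * Real.sqrt (logPlus (‖θ • v‖ / L))}

def nzd {m : ℕ} (w : EuclideanSpace ℝ (Fin m)) : EuclideanSpace ℝ (Fin m) := ‖w‖⁻¹ • w

def trunc {n : ℕ} (v : EuclideanSpace ℝ (Fin n)) (σ : Equiv.Perm (Fin n)) (k : ℕ)
    (hk : k ≤ n) : EuclideanSpace ℝ (Fin k) := WithLp.toLp 2 (fun i => v (σ (Fin.castLE hk i)))

def IsOrdering {n : ℕ} (v : EuclideanSpace ℝ (Fin n)) (σ : Equiv.Perm (Fin n)) : Prop :=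
  ∀ i j : Fin n, i ≤ j → |v (σ i)| ≤ |v (σ j)|

def TV {n k : ℕ} (v : EuclideanSpace ℝ (Fin n)) (I : Finset (Fin n)) (h : I.card = k) :
    EuclideanSpace ℝ (Fin k) := WithLp.toLp 2 (fun i => v (I.orderIsoOfFin h i))

def colE {n : ℕ} (A : Matrix (Fin n) (Fin n) ℝ) (l : Fin n) : EuclideanSpace ℝ (Fin n) :=
  WithLp.toLp 2 (fun i => A i l)

def GK {n : ℕ} (K : ℝ) (M : Matrix (Fin n) (Fin n) ℝ) : Set (EuclideanSpace ℝ (Fin n)) :=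
  {v | ‖v‖ ≤ 1 ∧ ‖mulE M v‖ ≤ 2 * K * Real.sqrt n}

def EI {n : ℕ} (I : Finset (Fin n)) : Set (EuclideanSpace ℝ (Fin n)) :=
  {v | ∀ i, i ∉ I → v i = 0}

def IsCenteredSubgUnit (ν : Measure ℝ) : Prop :=
  IsProbabilityMeasure ν ∧ (∫ x, x ∂ν) = 0 ∧ (∫ x, x ^ 2 ∂ν) = 1 ∧
    ∃ B > 0, ∀ t > 0, ν {x : ℝ | t < |x|} ≤ ENNReal.ofReal (2 * Real.exp (-t ^ 2 / B ^ 2))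

def IsIIDEntries {n : ℕ} {Ω : Type} [MeasureSpace Ω] (ν : Measure ℝ)
    (R : Ω → Matrix (Fin n) (Fin n) ℝ) : Prop :=
  (∀ i j, Measurable fun ω => R ω i j) ∧
  (∀ i j, Measure.map (fun ω => R ω i j) ℙ = ν) ∧
  iIndepFun (fun ij : Fin n × Fin n => fun ω => R ω ij.1 ij.2) ℙ


def aseq {n : ℕ} (v : EuclideanSpace ℝ (Fin n)) (σ : Equiv.Perm (Fin n)) (i : ℕ) : ℝ :=
  if h : i < n then |v (σ ⟨i, h⟩)| else 0

def Ssum {n : ℕ} (v : EuclideanSpace ℝ (Fin n)) (σ : Equiv.Perm (Fin n)) (k : ℕ) : ℝ :=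
  ∑ i ∈ Finset.range k, (aseq v σ i)^2

lemma aseq_nonneg {n : ℕ} (v : EuclideanSpace ℝ (Fin n)) (σ : Equiv.Perm (Fin n)) (i : ℕ) :
    0 ≤ aseq v σ i := by
  unfold aseq; split
  · exact abs_nonneg _
  · exact le_refl 0

lemma aseq_mono {n : ℕ} {v : EuclideanSpace ℝ (Fin n)} {σ : Equiv.Perm (Fin n)}
    (hσ : IsOrdering v σ) {i j : ℕ} (hij : i ≤ j) (hj : j < n) :
    aseq v σ i ≤ aseq v σ j := by
  have hi : i < n := lt_of_le_of_lt hij hj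
  rw [aseq, aseq, dif_pos hi, dif_pos hj]
  exact hσ ⟨i, hi⟩ ⟨j, hj⟩ hij

lemma Ssum_nonneg {n : ℕ} (v : EuclideanSpace ℝ (Fin n)) (σ : Equiv.Perm (Fin n)) (k : ℕ) :
    0 ≤ Ssum v σ k :=
  Finset.sum_nonneg fun _ _ => sq_nonneg _

lemma Ssum_eq_sum {n : ℕ} (v : EuclideanSpace ℝ (Fin n)) (σ : Equiv.Perm (Fin n)) {k : ℕ}
    (hk : k ≤ n) : Ssum v σ k = ∑ i : Fin k, (v (σ (Fin.castLE hk i)))^2 := by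
  rw [Ssum, ← Fin.sum_univ_eq_sum_range (fun i => (aseq v σ i)^2) k]
  apply Finset.sum_congr rfl
  intro i _
  rw [aseq, dif_pos (lt_of_lt_of_le i.2 hk), sq_abs]
  rfl

lemma Ssum_top {n : ℕ} (v : EuclideanSpace ℝ (Fin n)) (σ : Equiv.Perm (Fin n))
    (hv : ‖v‖ = 1) : Ssum v σ n = 1 := by
  rw [Ssum_eq_sum v σ (le_refl n)]
  have h1 : ∑ i : Fin n, (v (σ (Fin.castLE (le_refl n) i)))^2 = ∑ i : Fin n, (v (σ i))^2 := by
    apply Finset.sum_congr rfl; intro i _; congr 1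
  have h2 : ∑ i : Fin n, (v (σ i))^2 = ∑ i : Fin n, (v i)^2 := Equiv.sum_comp σ (fun i => (v i)^2)
  have h3 : ∑ i : Fin n, (v i)^2 = 1 := by
    have h := EuclideanSpace.norm_eq v
    rw [hv] at h
    have h4 : ∑ i : Fin n, ‖v i‖^2 = 1 := Real.sqrt_eq_one.mp h.symm
    calc ∑ i : Fin n, (v i)^2 = ∑ i : Fin n, ‖v i‖^2 := by
          apply Finset.sum_congr rfl; intro i _; rw [Real.norm_eq_abs, sq_abs]
      _ = 1 := h4
  rw [h1, h2, h3]

lemma trunc_norm {n : ℕ} (v : EuclideanSpace ℝ (Fin n)) (σ : Equiv.Perm (Fin n)) {k : ℕ}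
    (hk : k ≤ n) : ‖trunc v σ k hk‖ = Real.sqrt (Ssum v σ k) := by
  rw [EuclideanSpace.norm_eq, Ssum_eq_sum v σ hk]
  congr 1
  apply Finset.sum_congr rfl
  intro i _
  rw [Real.norm_eq_abs, sq_abs]
  rfl

lemma card_ge_subtype {n k : ℕ} (hk : k ≤ n) : Fintype.card {j : Fin n // k ≤ (j:ℕ)} = n - k := by
  have e : Fin k ≃ {j : Fin n // (j:ℕ) < k} :=
    { toFun := fun i => ⟨⟨i, lt_of_lt_of_le i.2 hk⟩, i.2⟩
      invFun := fun j => ⟨(j.1 : ℕ), j.2⟩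
      left_inv := fun i => rfl
      right_inv := fun j => rfl }
  have h1 : Fintype.card {j : Fin n // (j:ℕ) < k} = k := by
    rw [← Fintype.card_congr e, Fintype.card_fin]
  have h2 : Fintype.card {j : Fin n // ¬ ((j:ℕ) < k)} = n - k := by
    rw [Fintype.card_subtype_compl, h1, Fintype.card_fin]
  rw [← h2]
  exact Fintype.card_congr (Equiv.subtypeEquivRight (fun j => (not_lt).symm))

lemma incomp_Ssum {n : ℕ} {v : EuclideanSpace ℝ (Fin n)} (σ : Equiv.Perm (Fin n))
    {δ ρ : ℝ} (hρ : 0 ≤ ρ) (hv : v ∈ Incomp δ ρ) {k : ℕ} (hk : k ≤ n)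
    (hcard : ((n - k : ℕ):ℝ) ≤ δ * n) : ρ^2 < Ssum v σ k := by
  classical
  obtain ⟨hvnorm, hvcomp⟩ := hv
  set z : EuclideanSpace ℝ (Fin n) := WithLp.toLp 2 (fun i => if k ≤ ((σ.symm i : Fin n) : ℕ) then v i else 0)
    with hz
  have hsupp : (suppCard z : ℝ) ≤ δ * n := by
    refine le_trans ?_ hcard
    have h1 : suppCard z ≤ n - k := by
      rw [suppCard, Nat.card_eq_fintype_card]
      calc Fintype.card {i : Fin n // z i ≠ 0}
          ≤ Fintype.card {i : Fin n // k ≤ ((σ.symm i : Fin n) : ℕ)} := by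
            apply Fintype.card_subtype_mono
            intro i hi
            by_contra h
            exact hi (by rw [hz]; simp only [if_neg h])
        _ = Fintype.card {j : Fin n // k ≤ (j:ℕ)} :=
            Fintype.card_congr (Equiv.subtypeEquiv σ.symm (fun i => Iff.rfl))
        _ = n - k := card_ge_subtype hk
    exact_mod_cast h1
  have hdist : ‖v - z‖ = Real.sqrt (Ssum v σ k) := by
    rw [EuclideanSpace.norm_eq]
    congr 1
    have h1 : ∀ i : Fin n, ‖(v - z) i‖^2
        = (if k ≤ ((σ.symm i : Fin n) : ℕ) then 0 else (v i)^2) := by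
      intro i
      have hvz : (v - z) i = v i - z i := rfl
      by_cases hc : k ≤ ((σ.symm i : Fin n) : ℕ)
      · have hzi : z i = v i := by simp only [hz]; rw [if_pos hc]
        rw [if_pos hc, hvz, hzi, sub_self, norm_zero]
        norm_num
      · have hzi : z i = (0:ℝ) := by simp only [hz]; rw [if_neg hc]
        rw [if_neg hc, hvz, hzi, sub_zero, Real.norm_eq_abs, sq_abs]
    rw [Finset.sum_congr rfl (fun i _ => h1 i)]
    have h2 : ∑ i : Fin n, (if k ≤ ((σ.symm i : Fin n) : ℕ) then 0 else (v i)^2)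
        = ∑ j : Fin n, (if k ≤ (j:ℕ) then 0 else (v (σ j))^2) := by
      rw [← Equiv.sum_comp σ (fun i => (if k ≤ ((σ.symm i : Fin n) : ℕ) then 0 else (v i)^2))]
      apply Finset.sum_congr rfl
      intro j _
      simp
    rw [h2]
    have h3 : ∑ j : Fin n, (if k ≤ (j:ℕ) then 0 else (v (σ j))^2)
        = ∑ m ∈ Finset.range n, (if k ≤ m then 0 else (aseq v σ m)^2) := by
      rw [← Fin.sum_univ_eq_sum_range (fun m => (if k ≤ m then 0 else (aseq v σ m)^2)) n]
      apply Finset.sum_congr rfl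
      intro j _
      congr 1
      rw [aseq, dif_pos j.2, sq_abs]
    rw [h3, Ssum]
    rw [← Finset.sum_subset (Finset.range_subset_range.2 hk)
      (fun x _ hx => by rw [if_pos (by simpa using hx)])]
    apply Finset.sum_congr rfl
    intro m hm
    rw [if_neg (by simpa using hm)]
  have hgt : ρ < ‖v - z‖ := by
    by_contra h
    push_neg at h
    exact hvcomp ⟨hvnorm, z, hsupp, h⟩
  calc ρ^2 < ‖v - z‖^2 := by
        apply pow_lt_pow_left₀ hgt hρ
        norm_num
    _ = Ssum v σ k := by rw [hdist, Real.sq_sqrt (Ssum_nonneg v σ k)]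

lemma norm_sub_toE {k : ℕ} (x : EuclideanSpace ℝ (Fin k)) (p : Fin k → ℤ) :
    ‖x - toE (fun i => (p i : ℝ))‖ = Real.sqrt (∑ i, (x i - (p i : ℝ))^2) := by
  rw [EuclideanSpace.norm_eq]
  congr 1
  apply Finset.sum_congr rfl
  intro i _
  have h : (x - toE fun i => ((p i : ℝ))) i = x i - (p i : ℝ) := rfl
  rw [h, Real.norm_eq_abs, sq_abs]

lemma lcd_aux (L : ℝ) (hL : 0 < L) {k : ℕ} (u : EuclideanSpace ℝ (Fin k)) (hu : ‖u‖ = 1)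
    (B : ℝ) (hB : 0 < B) (hbd : ∀ i, |u i| ≤ B) : 1/(2*B) ≤ LCD L u := by
  have husq : ∑ i, (u i)^2 = 1 := by
    have h := EuclideanSpace.norm_eq u
    rw [hu] at h
    have h2 : Real.sqrt (∑ i, ‖u i‖^2) = 1 := h.symm
    have h3 : ∑ i, ‖u i‖^2 = 1 := Real.sqrt_eq_one.mp h2
    calc ∑ i, (u i)^2 = ∑ i, ‖u i‖^2 := by
          apply Finset.sum_congr rfl; intro i _; rw [Real.norm_eq_abs, sq_abs]
      _ = 1 := h3
  have hLne : L ≠ 0 := ne_of_gt hL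
  -- the defining set
  set A := {θ : ℝ | 0 < θ ∧ ∃ p : Fin k → ℤ,
    ‖θ • u - toE (fun i => (p i : ℝ))‖ < L * Real.sqrt (logPlus (‖θ • u‖ / L))} with hA
  have hnormsmul : ∀ θ : ℝ, 0 < θ → ‖θ • u‖ = θ := by
    intro θ hθ
    rw [norm_smul, hu, Real.norm_eq_abs, abs_of_pos hθ, mul_one]
  -- nonempty
  have hne : A.Nonempty := by
    refine ⟨L * Real.exp ((k:ℝ)/L^2 + 1), ?_, fun i => round ((L * Real.exp ((k:ℝ)/L^2 + 1)) * u i), ?_⟩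
    · positivity
    · set θ₀ := L * Real.exp ((k:ℝ)/L^2 + 1) with hθ₀
      have hθ₀pos : 0 < θ₀ := by positivity
      have hsmul : ∀ i, (θ₀ • u) i = θ₀ * u i := fun i => rfl
      rw [norm_sub_toE, hnormsmul θ₀ hθ₀pos]
      have hdivL : θ₀ / L = Real.exp ((k:ℝ)/L^2 + 1) := by
        rw [hθ₀, mul_div_cancel_left₀ _ hLne]
      have hlp : logPlus (θ₀ / L) = (k:ℝ)/L^2 + 1 := by
        rw [hdivL, logPlus, Real.log_exp]
        apply max_eq_left
        positivity
      rw [hlp]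
      have hsum : ∑ i, ((θ₀ • u) i - (round (θ₀ * u i) : ℝ))^2 ≤ (k:ℝ) * (1/4) := by
        calc ∑ i, ((θ₀ • u) i - (round (θ₀ * u i) : ℝ))^2
            ≤ ∑ _i : Fin k, (1/2:ℝ)^2 := by
              apply Finset.sum_le_sum
              intro i _
              rw [hsmul i]
              have h1 : |θ₀ * u i - (round (θ₀ * u i) : ℝ)| ≤ 1/2 := abs_sub_round _
              calc (θ₀ * u i - (round (θ₀ * u i) : ℝ))^2 = |θ₀ * u i - (round (θ₀ * u i) : ℝ)|^2 := (sq_abs _).symm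
                _ ≤ (1/2:ℝ)^2 := by apply pow_le_pow_left₀ (abs_nonneg _) h1
          _ = (k:ℝ) * (1/2)^2 := by rw [Finset.sum_const, Finset.card_univ, Fintype.card_fin, nsmul_eq_mul]
          _ = (k:ℝ) * (1/4) := by norm_num
      have hR : L * Real.sqrt ((k:ℝ)/L^2 + 1) = Real.sqrt ((k:ℝ) + L^2) := by
        have heq : L^2 * ((k:ℝ)/L^2 + 1) = (k:ℝ) + L^2 := by field_simp
        calc L * Real.sqrt ((k:ℝ)/L^2 + 1) = Real.sqrt (L^2) * Real.sqrt ((k:ℝ)/L^2 + 1) := by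
              rw [Real.sqrt_sq hL.le]
          _ = Real.sqrt (L^2 * ((k:ℝ)/L^2 + 1)) := (Real.sqrt_mul (by positivity) _).symm
          _ = Real.sqrt ((k:ℝ) + L^2) := by rw [heq]
      rw [hR]
      apply lt_of_le_of_lt (Real.sqrt_le_sqrt hsum)
      apply Real.sqrt_lt_sqrt (by positivity)
      nlinarith [sq_nonneg L, hL]
  -- lower bound
  rw [LCD]
  apply le_csInf hne
  intro θ hθmem
  obtain ⟨hθpos, p, hp⟩ := hθmem
  by_contra hcon
  push_neg at hcon
  have hθB : θ * B < 1/2 := by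
    have : θ < 1/(2*B) := hcon
    calc θ * B < (1/(2*B)) * B := by apply mul_lt_mul_of_pos_right this hB
      _ = 1/2 := by field_simp
  have hcoord : ∀ i, |θ * u i| ≤ (θ * B) := by
    intro i
    rw [abs_mul, abs_of_pos hθpos]
    exact mul_le_mul_of_nonneg_left (hbd i) hθpos.le
  have hkey : ∀ i, (θ * u i)^2 ≤ (θ * u i - (p i : ℝ))^2 := by
    intro i
    have h1 : |θ * u i| < 1/2 := lt_of_le_of_lt (hcoord i) hθB
    rcases eq_or_ne (p i) 0 with h0 | h0
    · rw [h0]; norm_num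
    · have h2 : (1:ℝ) ≤ |(p i : ℝ)| := by
        rw [← Int.cast_abs]
        exact_mod_cast Int.one_le_abs h0
      have h3 : |θ * u i| ≤ |θ * u i - (p i : ℝ)| := by
        have := abs_sub_abs_le_abs_sub ((p i : ℝ)) (θ * u i)
        rw [abs_sub_comm] at this
        linarith
      calc (θ * u i)^2 = |θ * u i|^2 := (sq_abs _).symm
        _ ≤ |θ * u i - (p i : ℝ)|^2 := pow_le_pow_left₀ (abs_nonneg _) h3 2
        _ = (θ * u i - (p i : ℝ))^2 := sq_abs _
  have hsumge : θ^2 ≤ ∑ i, ((θ • u) i - (p i : ℝ))^2 := by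
    have : ∑ i, (θ * u i)^2 = θ^2 := by
      calc ∑ i, (θ * u i)^2 = ∑ i, θ^2 * (u i)^2 := by
            apply Finset.sum_congr rfl; intro i _; ring
        _ = θ^2 * ∑ i, (u i)^2 := by rw [Finset.mul_sum]
        _ = θ^2 := by rw [husq, mul_one]
    rw [← this]
    apply Finset.sum_le_sum
    intro i _
    exact hkey i
  have hnorm_ge : θ ≤ ‖θ • u - toE (fun i => ((p i : ℝ)))‖ := by
    rw [norm_sub_toE]
    calc θ = Real.sqrt (θ^2) := (Real.sqrt_sq hθpos.le).symm
      _ ≤ _ := Real.sqrt_le_sqrt hsumge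
  -- contradiction : L√(logPlus(θ/L)) ≤ θ
  have hfinal : L * Real.sqrt (logPlus (‖θ • u‖ / L)) ≤ θ := by
    rw [hnormsmul θ hθpos]
    set s := θ / L with hs
    have hspos : 0 < s := div_pos hθpos hL
    rcases le_or_gt s 1 with h1 | h1
    · have : logPlus s = 0 := by
        rw [logPlus, max_eq_right]
        exact Real.log_nonpos hspos.le h1
      rw [this, Real.sqrt_zero, mul_zero]
      exact hθpos.le
    · have hlog : logPlus s = Real.log s := by
        rw [logPlus, max_eq_left]
        exact Real.log_nonneg h1.le
      rw [hlog]
      have h2 : Real.log s ≤ s^2 := by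
        have := Real.log_le_sub_one_of_pos hspos
        nlinarith
      have h3 : Real.sqrt (Real.log s) ≤ s := by
        calc Real.sqrt (Real.log s) ≤ Real.sqrt (s^2) := Real.sqrt_le_sqrt h2
          _ = s := Real.sqrt_sq hspos.le
      calc L * Real.sqrt (Real.log s) ≤ L * s := by apply mul_le_mul_of_nonneg_left h3 hL.le
        _ = θ := by rw [hs]; field_simp
  linarith

set_option maxHeartbeats 2000000 in
theorem lcd_lower_bound_incompressible
    (L : ℝ) (hL : 0 < L) (δ : ℝ) (hδ0 : 0 < δ) (hδ1 : δ < 1) :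
    ∃ c > (0:ℝ), ∃ n₀ : ℕ, ∀ γ : ℝ, 1/2 < γ → γ < 1 → ∀ n > n₀,
      ∀ v ∈ Paper.Incomp (n := n) δ (δ * (n:ℝ) ^ ((1:ℝ)/2 - γ)),
      ∀ σ : Equiv.Perm (Fin n), Paper.IsOrdering v σ →
      ∃ k : ℕ, ∃ hk : k ≤ n, 1 ≤ k ∧ (n:ℝ) - δ * n / Real.log n ≤ (k:ℝ) ∧
        c * Real.sqrt n / Real.log n ≤ Paper.LCD L (Paper.nzd (Paper.trunc v σ k hk)) := by
  have h3pos : (0:ℝ) < Real.sqrt 3 := Real.sqrt_pos.2 (by norm_num)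
  have hδs : (0:ℝ) < Real.sqrt δ := Real.sqrt_pos.2 hδ0
  refine ⟨Real.sqrt δ / (2 * Real.sqrt 3), by positivity, ⌈(2304:ℝ)/δ^2⌉₊ + 3, ?_⟩
  set c := Real.sqrt δ / (2 * Real.sqrt 3) with hc
  intro γ hγ1 hγ2 n hn v hv σ hσ
  -- basic facts about n
  have hn4 : 4 ≤ n := by omega
  have hn4R : (4:ℝ) ≤ (n:ℝ) := by exact_mod_cast hn4
  have hn0 : (0:ℝ) < (n:ℝ) := by linarith
  have hn1 : (1:ℝ) < (n:ℝ) := by linarith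
  have hnR : (2304:ℝ)/δ^2 ≤ (n:ℝ) := by
    have h1 : (⌈(2304:ℝ)/δ^2⌉₊ : ℝ) ≤ (n:ℝ) := by
      have : ⌈(2304:ℝ)/δ^2⌉₊ ≤ n := by omega
      exact_mod_cast this
    exact le_trans (Nat.le_ceil _) h1
  have hlog1 : 1 ≤ Real.log n := by
    rw [Real.le_log_iff_exp_le hn0]
    have := Real.exp_one_lt_d9
    linarith
  have hlogpos : (0:ℝ) < Real.log n := by linarith
  have hsqnpos : (0:ℝ) < Real.sqrt n := Real.sqrt_pos.2 hn0
  have hsqn : (48:ℝ)/δ ≤ Real.sqrt n := by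
    rw [Real.le_sqrt (by positivity) hn0.le]
    calc ((48:ℝ)/δ)^2 = 2304/δ^2 := by ring
      _ ≤ (n:ℝ) := hnR
  have hmulself : Real.sqrt (n:ℝ) * Real.sqrt (n:ℝ) = (n:ℝ) := Real.mul_self_sqrt hn0.le
  have hlogsq : 3 * (Real.log n)^2 ≤ δ * n := by
    have hssn : (0:ℝ) < Real.sqrt (Real.sqrt n) := Real.sqrt_pos.2 hsqnpos
    have h1 : Real.log n = 4 * Real.log (Real.sqrt (Real.sqrt n)) := by
      rw [Real.log_sqrt hsqnpos.le, Real.log_sqrt hn0.le]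
      ring
    have h2 : Real.log (Real.sqrt (Real.sqrt n)) ≤ Real.sqrt (Real.sqrt n) := by
      have := Real.log_le_sub_one_of_pos hssn
      linarith
    have h3 : Real.log n ≤ 4 * Real.sqrt (Real.sqrt n) := by
      rw [h1]
      linarith
    have h4 : (Real.log n)^2 ≤ 16 * Real.sqrt n := by
      have hmss : Real.sqrt (Real.sqrt n) * Real.sqrt (Real.sqrt n) = Real.sqrt n :=
        Real.mul_self_sqrt hsqnpos.le
      nlinarith [hlogpos]
    have h5 : (48:ℝ) ≤ Real.sqrt n * δ := (div_le_iff₀ hδ0).1 hsqn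
    nlinarith [hsqnpos]
  have hδn2 : (2:ℝ) ≤ δ * n := by
    have : (2304:ℝ)/δ ≤ δ * n := by
      rw [div_le_iff₀ hδ0]
      have h1 := mul_le_mul_of_nonneg_left hnR (sq_nonneg δ)
      have h2 : δ^2 * ((2304:ℝ)/δ^2) = 2304 := by field_simp
      nlinarith [h1, h2]
    have hδ1' : (2304:ℝ) ≤ 2304/δ := by
      rw [le_div_iff₀ hδ0]
      nlinarith
    linarith
  -- ρ
  set ρ := δ * (n:ℝ) ^ ((1:ℝ)/2 - γ) with hρ
  have hρpos : 0 < ρ := by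
    apply mul_pos hδ0
    exact Real.rpow_pos_of_pos hn0 _
  have hρsq : δ^2/(n:ℝ) ≤ ρ^2 := by
    have h1 : ((n:ℝ) ^ ((1:ℝ)/2 - γ))^2 = (n:ℝ) ^ (((1:ℝ)/2 - γ)*2) := by
      rw [← Real.rpow_natCast ((n:ℝ)^((1:ℝ)/2 - γ)) 2, ← Real.rpow_mul hn0.le]
      norm_num
    have h2 : (n:ℝ) ^ ((-1:ℝ)) ≤ (n:ℝ) ^ (((1:ℝ)/2 - γ)*2) := by
      apply (Real.rpow_le_rpow_left_iff hn1).2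
      linarith
    have h3 : (n:ℝ) ^ ((-1:ℝ)) = ((n:ℝ))⁻¹ := Real.rpow_neg_one _
    have h4 : ρ^2 = δ^2 * ((n:ℝ) ^ ((1:ℝ)/2 - γ))^2 := by rw [hρ]; ring
    rw [h4, h1]
    calc δ^2/(n:ℝ) = δ^2 * ((n:ℝ))⁻¹ := by ring
      _ = δ^2 * (n:ℝ) ^ ((-1:ℝ)) := by rw [h3]
      _ ≤ δ^2 * (n:ℝ) ^ (((1:ℝ)/2 - γ)*2) := by
          apply mul_le_mul_of_nonneg_left h2 (sq_nonneg δ)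
  -- r and β
  set r := ⌊δ * n / Real.log n⌋₊ with hr
  have hrle : (r:ℝ) ≤ δ * n / Real.log n := Nat.floor_le (by positivity)
  have hdivle : δ * n / Real.log n ≤ δ * n := by
    apply div_le_self (by positivity) hlog1
  have hrltn : (r:ℝ) < (n:ℝ) := by
    have : δ * (n:ℝ) < 1 * n := by
      apply mul_lt_mul_of_pos_right hδ1 hn0
    linarith
  have hrn : r < n := by exact_mod_cast hrltn
  have hrgt : δ * n / Real.log n - 1 < (r:ℝ) := Nat.sub_one_lt_floor _
  set β := 3 * (Real.log n)^2 / (δ * n) with hβ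
  have hβpos : 0 < β := by positivity
  have hβ1 : β ≤ 1 := by
    rw [hβ, div_le_one (by positivity)]
    exact hlogsq
  obtain ⟨hvnorm, hvcomp⟩ := hv
  have hSn : Paper.Ssum v σ n = 1 := Paper.Ssum_top v σ hvnorm
  have hS : ∀ k : ℕ, k ≤ n → ((n - k : ℕ):ℝ) ≤ δ * n → ρ^2 < Paper.Ssum v σ k := by
    intro k hk hcard
    exact Paper.incomp_Ssum σ hρpos.le ⟨hvnorm, hvcomp⟩ hk hcard
  -- key pigeonhole claim
  have hex : ∃ k : ℕ, n - r ≤ k ∧ k ≤ n ∧ (Paper.aseq v σ (k-1))^2 ≤ β * Paper.Ssum v σ k := by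
    by_contra hA
    push_neg at hA
    have hind : ∀ j : ℕ, j ≤ r → Paper.Ssum v σ (n - j) ≤ (1-β)^j := by
      intro j
      induction j with
      | zero => intro _; rw [Nat.sub_zero, hSn, pow_zero]
      | succ j ih =>
        intro hj
        have hj' : j ≤ r := by omega
        have h1 := ih hj'
        have hk := hA (n - j) (by omega) (by omega)
        have hstep : Paper.Ssum v σ (n - j)
            = Paper.Ssum v σ (n - (j+1)) + (Paper.aseq v σ (n - (j+1)))^2 := by
          have he : n - j = (n - (j+1)) + 1 := by omega
          rw [he, Paper.Ssum, Finset.sum_range_succ]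
          rfl
        have hidx : n - j - 1 = n - (j+1) := by omega
        rw [hidx] at hk
        have h2 : Paper.Ssum v σ (n - (j+1)) ≤ (1-β) * Paper.Ssum v σ (n - j) := by
          linarith [hk, hstep]
        have h3 : (1-β) * Paper.Ssum v σ (n - j) ≤ (1-β) * (1-β)^j :=
          mul_le_mul_of_nonneg_left h1 (by linarith)
        calc Paper.Ssum v σ (n - (j+1)) ≤ (1-β) * (1-β)^j := le_trans h2 h3
          _ = (1-β)^(j+1) := by ring
    have h2 := hind r (le_refl r)
    have hcast : ((n - (n - r) : ℕ):ℝ) = (r:ℝ) := by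
      congr 1
      omega
    have h3 : ρ^2 < Paper.Ssum v σ (n - r) := by
      apply hS (n - r) (by omega)
      rw [hcast]
      linarith
    have h4 : (1-β)^r ≤ Real.exp (-β) ^ r := by
      apply pow_le_pow_left₀ (by linarith)
      linarith [Real.add_one_le_exp (-β)]
    have h5 : Real.exp (-β) ^ r = Real.exp ((r:ℝ) * (-β)) := (Real.exp_nat_mul _ r).symm
    have h6 : Real.exp ((r:ℝ) * (-β)) ≤ Real.exp (1 - 3 * Real.log n) := by
      apply Real.exp_le_exp.2
      have hmul : (δ * n / Real.log n - 1) * β ≤ (r:ℝ) * β :=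
        mul_le_mul_of_nonneg_right (le_of_lt hrgt) hβpos.le
      have hc2 : (δ * n / Real.log n) * β = 3 * Real.log n := by
        rw [hβ]
        field_simp
      nlinarith [hmul, hc2, hβ1, hβpos]
    have h7 : Real.exp (1 - 3 * Real.log n) = Real.exp 1 / (n:ℝ)^3 := by
      rw [Real.exp_sub]
      congr 1
      rw [show (3:ℝ) * Real.log n = ((3:ℕ):ℝ) * Real.log n by norm_num,
        Real.exp_nat_mul, Real.exp_log hn0]
    have hchain : δ^2/(n:ℝ) < Real.exp 1 / (n:ℝ)^3 := by
      have := le_trans (le_trans h4 (le_of_eq h5)) h6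
      rw [h7] at this
      linarith
    have hfin : δ^2 * (n:ℝ)^2 < Real.exp 1 := by
      rw [div_lt_div_iff₀ hn0 (by positivity)] at hchain
      nlinarith [hn0]
    have hge4 : (4:ℝ) ≤ δ^2 * (n:ℝ)^2 := by nlinarith [hδn2]
    have he3 : Real.exp 1 < 3 := by
      have := Real.exp_one_lt_d9
      linarith
    linarith
  obtain ⟨k, hk1, hk2, hk3⟩ := hex
  have hk1' : 1 ≤ k := by omega
  have hkm1 : k - 1 < n := by omega
  have hkcard : ((n - k : ℕ):ℝ) ≤ δ * n := by
    have h1 : ((n - k : ℕ):ℝ) ≤ (r:ℝ) := by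
      have : n - k ≤ r := by omega
      exact_mod_cast this
    linarith
  have hSk : ρ^2 < Paper.Ssum v σ k := hS k hk2 hkcard
  have hSkpos : 0 < Paper.Ssum v σ k := lt_trans (by positivity) hSk
  have hsqSpos : 0 < Real.sqrt (Paper.Ssum v σ k) := Real.sqrt_pos.2 hSkpos
  set a := Paper.aseq v σ (k-1) with ha
  have hanneg : 0 ≤ a := Paper.aseq_nonneg v σ (k-1)
  have hapos : 0 < a := by
    rcases lt_or_eq_of_le hanneg with h | h
    · exact h
    · exfalso
      have hzero : Paper.Ssum v σ k = 0 := by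
        rw [Paper.Ssum]
        apply Finset.sum_eq_zero
        intro i hi
        have hik : i < k := Finset.mem_range.1 hi
        have h1 : Paper.aseq v σ i ≤ a := Paper.aseq_mono hσ (by omega) hkm1
        have h2 : 0 ≤ Paper.aseq v σ i := Paper.aseq_nonneg v σ i
        have : Paper.aseq v σ i = 0 := le_antisymm (h.symm ▸ h1) h2
        rw [this]
        norm_num
      rw [hzero] at hSkpos
      exact lt_irrefl 0 hSkpos
  -- truncation and normalization
  set w := Paper.trunc v σ k hk2 with hw
  have hwnorm : ‖w‖ = Real.sqrt (Paper.Ssum v σ k) := Paper.trunc_norm v σ hk2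
  have hwpos : 0 < ‖w‖ := by rw [hwnorm]; exact hsqSpos
  have hu1 : ‖Paper.nzd w‖ = 1 := by
    rw [Paper.nzd, norm_smul, Real.norm_eq_abs, abs_of_pos (inv_pos.2 hwpos),
      inv_mul_cancel₀ (ne_of_gt hwpos)]
  set B := a / Real.sqrt (Paper.Ssum v σ k) with hB
  have hBpos : 0 < B := div_pos hapos hsqSpos
  have hbd : ∀ i : Fin k, |Paper.nzd w i| ≤ B := by
    intro i
    have h1 : Paper.nzd w i = ‖w‖⁻¹ * w i := rfl
    have h2 : |w i| ≤ a := by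
      have hwi : w i = v (σ (Fin.castLE hk2 i)) := rfl
      have : |w i| = Paper.aseq v σ (i:ℕ) := by
        rw [hwi, Paper.aseq, dif_pos (lt_of_lt_of_le i.2 hk2)]
        rfl
      rw [this, ha]
      exact Paper.aseq_mono hσ (by omega) hkm1
    rw [h1, abs_mul, abs_of_pos (inv_pos.2 hwpos), hwnorm, hB]
    rw [inv_mul_eq_div, div_le_div_iff₀ hsqSpos hsqSpos]
    exact mul_le_mul_of_nonneg_right h2 hsqSpos.le
  have hlcd : 1/(2*B) ≤ Paper.LCD L (Paper.nzd w) :=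
    Paper.lcd_aux L hL (Paper.nzd w) hu1 B hBpos hbd
  -- final comparison
  have hsqβ : Real.sqrt β = Real.sqrt 3 * Real.log n / (Real.sqrt δ * Real.sqrt n) := by
    have hq : β = (Real.sqrt 3 * Real.log n / (Real.sqrt δ * Real.sqrt n))^2 := by
      rw [hβ]
      rw [div_pow, mul_pow, mul_pow, Real.sq_sqrt (by norm_num : (0:ℝ) ≤ 3),
        Real.sq_sqrt hδ0.le, Real.sq_sqrt hn0.le]
    rw [hq, Real.sqrt_sq (by positivity)]
  have haB : a ≤ Real.sqrt β * Real.sqrt (Paper.Ssum v σ k) := by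
    calc a = Real.sqrt (a^2) := (Real.sqrt_sq hanneg).symm
      _ ≤ Real.sqrt (β * Paper.Ssum v σ k) := Real.sqrt_le_sqrt hk3
      _ = Real.sqrt β * Real.sqrt (Paper.Ssum v σ k) := Real.sqrt_mul hβpos.le _
  have heq : c * Real.sqrt n * (2 * Real.sqrt β) = Real.log n := by
    rw [hsqβ, hc]
    field_simp
  have hfinal : c * Real.sqrt n / Real.log n ≤ 1/(2*B) := by
    have hBval : 1/(2*B) = Real.sqrt (Paper.Ssum v σ k) / (2*a) := by
      rw [hB]
      field_simp
    rw [hBval, div_le_div_iff₀ hlogpos (by positivity : (0:ℝ) < 2*a)]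
    have hcpos : (0:ℝ) < c := by rw [hc]; positivity
    calc c * Real.sqrt n * (2*a)
        ≤ c * Real.sqrt n * (2*(Real.sqrt β * Real.sqrt (Paper.Ssum v σ k))) := by
          apply mul_le_mul_of_nonneg_left (by linarith) (by positivity)
      _ = (c * Real.sqrt n * (2 * Real.sqrt β)) * Real.sqrt (Paper.Ssum v σ k) := by ring
      _ = Real.log n * Real.sqrt (Paper.Ssum v σ k) := by rw [heq]
      _ = Real.sqrt (Paper.Ssum v σ k) * Real.log n := mul_comm _ _
  refine ⟨k, hk2, hk1', ?_, le_trans hfinal hlcd⟩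
  have h1 : ((n - r : ℕ):ℝ) ≤ (k:ℝ) := by exact_mod_cast hk1
  have h2 : ((n - r : ℕ):ℝ) = (n:ℝ) - (r:ℝ) := by
    rw [Nat.cast_sub (le_of_lt hrn)]
  linarith

end Paper
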